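/- arXiv:1408.5060 — 2 statements merged into one kernel-verified Lean document; each statement's English description precedes it below -/
import Mathlib

section
/- Let λ = 0 and β, γ > 0, set ω = β/(β+γ), and suppose v′ ≠ v″ (equivalently m₊, m₋ > 0) and 1−v′ ≤ ω ≤ v′. Then t^{‖(β,γ)‖_m} S(q_A(t^β), q_B(t^γ)) → 0 as t → ∞. -/
open MeasureTheory Filter Set

noncomputable section

/-- A positive function defined near `+∞` is slowly varying at infinity if
`L(at)/L(t) → 1` as `t → ∞` for every `a > 0`. -/
def SlowlyVarying (L : ℝ → ℝ) : Prop :=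
  (∀ᶠ t in atTop, 0 < L t) ∧
    ∀ a : ℝ, 0 < a → Tendsto (fun t => L (a * t) / L t) atTop (nhds 1)

/-- `N` is a norm on `ℝ²`, viewed as a two-argument function. -/
def IsNorm2 (N : ℝ → ℝ → ℝ) : Prop :=
  (∀ x y, 0 ≤ N x y) ∧ (∀ x y, N x y = 0 ↔ x = 0 ∧ y = 0) ∧
    (∀ c x y, N (c * x) (c * y) = |c| * N x y) ∧
    (∀ x₁ y₁ x₂ y₂, N (x₁ + x₂) (y₁ + y₂) ≤ N x₁ y₁ + N x₂ y₂)

/-- Condition (C1): symmetry of the norm. -/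
def CondC1 (N : ℝ → ℝ → ℝ) : Prop := ∀ x y, N x y = N y x

/-- Condition (C2): the norm dominates the sup-norm. -/
def CondC2 (N : ℝ → ℝ → ℝ) : Prop := ∀ x y : ℝ, max |x| |y| ≤ N x y

/-- Condition (C3): equality with the sup-norm off the diagonal. -/
def CondC3 (N : ℝ → ℝ → ℝ) : Prop :=
  ∃ x₀ y₀ : ℝ, 0 ≤ x₀ ∧ 0 ≤ y₀ ∧ x₀ ≠ y₀ ∧ N x₀ y₀ = max x₀ y₀

/-- τ(v) = ‖(v, 1−v)‖_m / v.  (At `v = 0` this real-valued version takes the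
junk value `0` instead of `+∞`; this is irrelevant for all integrals below,
which are taken against an atomless measure.) -/
def tau (N : ℝ → ℝ → ℝ) (v : ℝ) : ℝ := N v (1 - v) / v

/-- The probability measure associated with a distribution function `F_V` on
`[0,1]` that is continuous (no atoms) and strictly increasing (positive mass on
every nonempty open subinterval of `[0,1]`): Assumption 1. -/
def GoodMeasure (μ : Measure ℝ) : Prop :=
  μ ((Set.Icc (0:ℝ) 1)ᶜ) = 0 ∧ (∀ x : ℝ, μ {x} = 0) ∧
    ∀ a b : ℝ, 0 ≤ a → a < b → b ≤ 1 → 0 < μ (Set.Ioo a b)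

/-- The GP(1,λ) survivor function `(1 + λx)₊^{−1/λ}`, interpreted as `e^{−x}`
when `λ = 0`. -/
def gpTail (l x : ℝ) : ℝ :=
  if l = 0 then Real.exp (-x) else (max (1 + l * x) 0) ^ (-1 / l)

/-- Marginal survival function `S_A(x) = ∫₀¹ (1 + λ x τ(v))₊^{−1/λ} dF_V(v)`. -/
def survA (N : ℝ → ℝ → ℝ) (μ : Measure ℝ) (l x : ℝ) : ℝ :=
  ∫ v, gpTail l (x * tau N v) ∂μ

/-- Marginal survival function `S_B(y) = ∫₀¹ (1 + λ y τ(1−v))₊^{−1/λ} dF_V(v)`. -/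
def survB (N : ℝ → ℝ → ℝ) (μ : Measure ℝ) (l y : ℝ) : ℝ :=
  ∫ v, gpTail l (y * tau N (1 - v)) ∂μ

/-- Joint survival function
`S(x,y) = ∫₀¹ (1 + λ max{x τ(v), y τ(1−v)})₊^{−1/λ} dF_V(v)`. -/
def survJ (N : ℝ → ℝ → ℝ) (μ : Measure ℝ) (l x y : ℝ) : ℝ :=
  ∫ v, gpTail l (max (x * tau N v) (y * tau N (1 - v))) ∂μ

/-- `Ω₀ = {v ∈ [0,1] : τ(v) = 1}`. -/
def Omega0 (N : ℝ → ℝ → ℝ) : Set ℝ := {v | v ∈ Set.Icc (0:ℝ) 1 ∧ tau N v = 1}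

/-- `v′ = inf Ω₀`. -/
def vlo (N : ℝ → ℝ → ℝ) : ℝ := sInf (Omega0 N)

/-- `v″ = sup Ω₀`. -/
def vhi (N : ℝ → ℝ → ℝ) : ℝ := sSup (Omega0 N)

/-- The distribution function `F_V(x) = μ(−∞, x]`. -/
def Fdist (μ : Measure ℝ) (x : ℝ) : ℝ := (μ (Set.Iic x)).toReal

/-- `m₊ = F_V(v″) − F_V(v′)`. -/
def mPlus (N : ℝ → ℝ → ℝ) (μ : Measure ℝ) : ℝ := Fdist μ (vhi N) - Fdist μ (vlo N)

/-- `m₋ = F_V(1−v′) − F_V(1−v″)`. -/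
def mMinus (N : ℝ → ℝ → ℝ) (μ : Measure ℝ) : ℝ :=
  Fdist μ (1 - vlo N) - Fdist μ (1 - vhi N)

section MyAux
variable {N : ℝ → ℝ → ℝ}

lemma myN_smul (hN : IsNorm2 N) {c : ℝ} (hc : 0 ≤ c) (x y : ℝ) :
    N (c * x) (c * y) = c * N x y := by
  rw [hN.2.2.1, abs_of_nonneg hc]

lemma myN_sub_le (hN : IsNorm2 N) (a b x y : ℝ) :
    N a b ≤ N x y + N (a - x) (b - y) := by
  have := hN.2.2.2 x y (a - x) (b - y)
  simpa using this

lemma myN_abs_le (hN : IsNorm2 N) (a b : ℝ) : N a b ≤ |a| * N 1 0 + |b| * N 0 1 := by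
  have h1 : N a b ≤ N (a * 1) (a * 0) + N (b * 0) (b * 1) := by
    have := hN.2.2.2 (a * 1) (a * 0) (b * 0) (b * 1)
    simpa using this
  calc N a b ≤ N (a * 1) (a * 0) + N (b * 0) (b * 1) := h1
    _ = |a| * N 1 0 + |b| * N 0 1 := by rw [hN.2.2.1, hN.2.2.1]

lemma myN_cont (hN : IsNorm2 N) : Continuous fun v : ℝ => N v (1 - v) := by
  have key : ∀ v w : ℝ, N v (1 - v) - N w (1 - w) ≤ |v - w| * (N 1 0 + N 0 1) := by
    intro v w
    have h1 : N v (1 - v) ≤ N w (1 - w) + N (v - w) ((1 - v) - (1 - w)) :=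
      myN_sub_le hN _ _ _ _
    have h2 : N (v - w) ((1 - v) - (1 - w)) ≤ |v - w| * N 1 0 + |(1 - v) - (1 - w)| * N 0 1 :=
      myN_abs_le hN _ _
    have h3 : |(1 - v) - (1 - w)| = |v - w| := by rw [show (1 - v) - (1 - w) = -(v - w) by ring, abs_neg]
    rw [h3] at h2
    nlinarith [h2]
  have hL : LipschitzWith (Real.toNNReal (N 1 0 + N 0 1)) (fun v : ℝ => N v (1 - v)) := by
    apply LipschitzWith.of_dist_le_mul
    intro v w
    rw [Real.dist_eq, Real.dist_eq,
      Real.coe_toNNReal _ (add_nonneg (hN.1 1 0) (hN.1 0 1))]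
    rw [abs_sub_le_iff]
    constructor
    · have := key v w; linarith [this]
    · have := key w v; rw [show |w - v| = |v - w| by rw [abs_sub_comm]] at this; linarith
  exact hL.continuous

lemma my_tau_meas (hN : IsNorm2 N) : Measurable (tau N) :=
  (myN_cont hN).measurable.div measurable_id

lemma my_tau_nonneg (hN : IsNorm2 N) {v : ℝ} (hv : 0 ≤ v) : 0 ≤ tau N v :=
  div_nonneg (hN.1 _ _) hv

lemma my_tau_ge_one (hC2 : CondC2 N) {v : ℝ} (hv : 0 < v) : 1 ≤ tau N v := by
  have h1 : v ≤ N v (1 - v) := le_trans (le_trans (le_abs_self v) (le_max_left _ _)) (hC2 v (1 - v))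
  rw [tau, le_div_iff₀ hv]; linarith

lemma my_omega0_eq (hC2 : CondC2 N) :
    Omega0 N = Icc (1/2 : ℝ) 1 ∩ {v | N v (1 - v) = v} := by
  ext v
  simp only [Omega0, mem_setOf_eq, mem_inter_iff, mem_Icc]
  constructor
  · rintro ⟨⟨h0, h1⟩, ht⟩
    have hv0 : v ≠ 0 := by
      rintro rfl
      simp [tau] at ht
    have hv0' : 0 < v := lt_of_le_of_ne h0 (Ne.symm hv0)
    have hNv : N v (1 - v) = v := by
      rw [tau, div_eq_iff hv0, one_mul] at ht; exact ht
    have h2 : 1 - v ≤ N v (1 - v) := by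
      have := hC2 v (1 - v)
      have : |1 - v| ≤ N v (1 - v) := le_trans (le_max_right _ _) this
      rwa [abs_of_nonneg (by linarith)] at this
    exact ⟨⟨by linarith [hNv ▸ h2], h1⟩, hNv⟩
  · rintro ⟨⟨h0, h1⟩, hNv⟩
    have hv0 : (0:ℝ) < v := by linarith
    refine ⟨⟨by linarith, h1⟩, ?_⟩
    rw [tau, hNv, div_self (ne_of_gt hv0)]

lemma my_omega0_closed (hN : IsNorm2 N) (hC2 : CondC2 N) : IsClosed (Omega0 N) := by
  rw [my_omega0_eq hC2]
  exact isClosed_Icc.inter (isClosed_eq (myN_cont hN) continuous_id)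

lemma my_omega0_nonempty (hN : IsNorm2 N) (hC1 : CondC1 N) (hC3 : CondC3 N) :
    (Omega0 N).Nonempty := by
  obtain ⟨x₀, y₀, hx0, hy0, hxy, hmax⟩ := hC3
  -- wlog y₀ < x₀
  have main : ∀ a b : ℝ, 0 ≤ b → b < a → N a b = a → (Omega0 N).Nonempty := by
    intro a b hb hba hNab
    have ha : 0 < a := lt_of_le_of_lt hb hba
    have hs : 0 < a + b := by linarith
    refine ⟨a / (a + b), ?_⟩
    have h1v : 1 - a / (a + b) = b / (a + b) := by field_simp; ring
    have hvpos : 0 < a / (a + b) := div_pos ha hs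
    have hNv : N (a / (a + b)) (1 - a / (a + b)) = a / (a + b) := by
      rw [h1v]
      have : N ((a + b)⁻¹ * a) ((a + b)⁻¹ * b) = (a + b)⁻¹ * N a b :=
        myN_smul hN (by positivity) a b
      rw [div_eq_inv_mul, div_eq_inv_mul, this, hNab]
    constructor
    · constructor
      · exact le_of_lt hvpos
      · rw [div_le_one hs]; linarith
    · rw [tau, hNv, div_self (ne_of_gt hvpos)]
  rcases lt_or_gt_of_ne hxy with h | h
  · have : N y₀ x₀ = y₀ := by rw [← hC1]; rw [hmax, max_eq_right (le_of_lt h)]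
    exact main y₀ x₀ hx0 h this
  · have : N x₀ y₀ = x₀ := by rw [hmax, max_eq_left (le_of_lt h)]
    exact main x₀ y₀ hy0 h this

lemma my_omega0_bddBelow : BddBelow (Omega0 N) := ⟨0, fun v hv => hv.1.1⟩
lemma my_omega0_bddAbove : BddAbove (Omega0 N) := ⟨1, fun v hv => hv.1.2⟩

lemma my_vlo_mem (hN : IsNorm2 N) (hC1 : CondC1 N) (hC2 : CondC2 N) (hC3 : CondC3 N) :
    vlo N ∈ Omega0 N :=
  (my_omega0_closed hN hC2).csInf_mem (my_omega0_nonempty hN hC1 hC3) my_omega0_bddBelow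

lemma my_vhi_mem (hN : IsNorm2 N) (hC1 : CondC1 N) (hC2 : CondC2 N) (hC3 : CondC3 N) :
    vhi N ∈ Omega0 N :=
  (my_omega0_closed hN hC2).csSup_mem (my_omega0_nonempty hN hC1 hC3) my_omega0_bddAbove

lemma my_omega0_half {v : ℝ} (hC2 : CondC2 N) (hv : v ∈ Omega0 N) :
    1/2 ≤ v ∧ v ≤ 1 ∧ N v (1 - v) = v := by
  rw [my_omega0_eq hC2] at hv
  exact ⟨hv.1.1, hv.1.2, hv.2⟩

/-- τ = 1 on intervals between points of Ω₀ (convexity). -/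
lemma my_omega0_convex (hN : IsNorm2 N) (hC2 : CondC2 N) {a b c : ℝ}
    (ha : a ∈ Omega0 N) (hb : b ∈ Omega0 N) (hac : a ≤ c) (hcb : c ≤ b) :
    tau N c = 1 := by
  obtain ⟨ha2, ha1, hNa⟩ := my_omega0_half hC2 ha
  obtain ⟨hb2, hb1, hNb⟩ := my_omega0_half hC2 hb
  have hc0 : 0 < c := by linarith
  rcases eq_or_lt_of_le hac with rfl | hac'
  · exact ha.2
  have hab : a < b := lt_of_lt_of_le hac' hcb
  set l := (b - c) / (b - a) with hl
  have hba : b - a ≠ 0 := ne_of_gt (by linarith)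
  have hl0 : 0 ≤ l := div_nonneg (by linarith) (by linarith)
  have hlmul : l * (b - a) = b - c := by rw [hl]; exact div_mul_cancel₀ _ hba
  have hl1' : 0 ≤ 1 - l := by nlinarith [hlmul]
  have hcomb : c = l * a + (1 - l) * b := by nlinarith [hlmul]
  have hcomb2 : 1 - c = l * (1 - a) + (1 - l) * (1 - b) := by nlinarith [hlmul]
  have htri : N c (1 - c) ≤ N (l * a) (l * (1 - a)) + N ((1 - l) * b) ((1 - l) * (1 - b)) := by
    have := hN.2.2.2 (l * a) (l * (1 - a)) ((1 - l) * b) ((1 - l) * (1 - b))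
    rw [← hcomb2] at this
    rw [show l * a + (1 - l) * b = c by rw [hcomb]] at this
    exact this
  have hle : N c (1 - c) ≤ c := by
    rw [myN_smul hN hl0, myN_smul hN hl1', hNa, hNb] at htri
    calc N c (1 - c) ≤ l * a + (1 - l) * b := htri
      _ = c := hcomb.symm
  have hge : c ≤ N c (1 - c) := by
    have := hC2 c (1 - c)
    have h := le_trans (le_max_left |c| |1 - c|) this
    rwa [abs_of_pos hc0] at h
  rw [tau, le_antisymm hle hge, div_self (ne_of_gt hc0)]

/-- Strict decrease of v ↦ N(v,1−v)/v on (0, vlo]. -/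
lemma my_strict (hN : IsNorm2 N) (hC2 : CondC2 N)
    {v₀ : ℝ} (hv₀ : v₀ ∈ Omega0 N) (hv₀inf : ∀ u ∈ Omega0 N, v₀ ≤ u)
    {v w : ℝ} (hv : 0 < v) (hvw : v < w) (hw : w ≤ v₀) :
    tau N w < tau N v := by
  obtain ⟨hv₀2, hv₀1, hNv₀⟩ := my_omega0_half hC2 hv₀
  have hv₀0 : (0:ℝ) < v₀ := by linarith
  set φ : ℝ → ℝ := fun u => N 1 u with hφ
  -- convexity of φ
  have hconv : ∀ a b l : ℝ, 0 ≤ l → l ≤ 1 → φ (l * a + (1 - l) * b) ≤ l * φ a + (1 - l) * φ b := by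
    intro a b l hl0 hl1
    have h1 : φ (l * a + (1 - l) * b) = N (l * 1 + (1 - l) * 1) (l * a + (1 - l) * b) := by
      rw [hφ]; norm_num
    rw [h1]
    calc N (l * 1 + (1 - l) * 1) (l * a + (1 - l) * b)
        ≤ N (l * 1) (l * a) + N ((1 - l) * 1) ((1 - l) * b) := hN.2.2.2 _ _ _ _
      _ = l * φ a + (1 - l) * φ b := by
          rw [myN_smul hN hl0, myN_smul hN (by linarith)]
  -- tau via φ
  have htauφ : ∀ u : ℝ, 0 < u → tau N u = φ ((1 - u) / u) := by
    intro u hu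
    rw [tau, hφ]
    have : N u (1 - u) = N (u * 1) (u * ((1 - u) / u)) := by
      rw [mul_one, mul_div_cancel₀ _ (ne_of_gt hu)]
    rw [this, myN_smul hN (le_of_lt hu), mul_comm, mul_div_assoc, div_self (ne_of_gt hu), mul_one]
  set u' := (1 - v₀) / v₀ with hu'
  have hu'0 : 0 ≤ u' := div_nonneg (by linarith) (le_of_lt hv₀0)
  have hφu' : φ u' = 1 := by
    rw [← htauφ v₀ hv₀0]; exact hv₀.2
  -- φ(u) > 1 for u > u'
  have hgt1 : ∀ u : ℝ, u' < u → 1 < φ u := by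
    intro u hu
    have hu0 : 0 < 1 + u := by linarith
    set z := 1 / (1 + u) with hz
    have hz0 : 0 < z := by positivity
    have hz1 : z ≤ 1 := by rw [hz, div_le_one hu0]; linarith
    have hzu : (1 - z) / z = u := by rw [hz]; field_simp; ring
    have hzv₀ : z < v₀ := by
      rw [hz]
      have hv₀u' : v₀ = 1 / (1 + u') := by rw [hu']; field_simp; ring
      rw [hv₀u']
      apply div_lt_div_of_pos_left one_pos (by linarith) (by linarith)
    have hznot : z ∉ Omega0 N := fun hmem => absurd (hv₀inf z hmem) (not_le.mpr hzv₀)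
    have htz : tau N z ≠ 1 := by
      intro h
      exact hznot ⟨⟨le_of_lt hz0, hz1⟩, h⟩
    have := my_tau_ge_one hC2 hz0
    have h1 : 1 < tau N z := lt_of_le_of_ne this (Ne.symm htz)
    rwa [htauφ z hz0, hzu] at h1
  -- main
  have hw0 : 0 < w := lt_trans hv hvw
  set uv := (1 - v) / v with huv
  set uw := (1 - w) / w with huw
  have huvw : uw < uv := by
    rw [huv, huw]
    rw [div_lt_div_iff₀ hw0 hv]
    nlinarith
  have huwu' : u' ≤ uw := by
    rw [huw, hu']
    rw [div_le_div_iff₀ hv₀0 hw0]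
    nlinarith
  rw [htauφ v hv, htauφ w hw0, ← huv, ← huw]
  rcases eq_or_lt_of_le huwu' with heq | hlt
  · rw [← heq, hφu']
    exact hgt1 uv (heq ▸ huvw)
  · set l := (uv - uw) / (uv - u') with hlrep
    have hd : uv - u' ≠ 0 := ne_of_gt (by linarith)
    have hl0 : 0 < l := div_pos (by linarith) (by linarith)
    have hl1 : l < 1 := by rw [hlrep, div_lt_one (by linarith)]; linarith
    have hlmul : l * (uv - u') = uv - uw := by rw [hlrep]; exact div_mul_cancel₀ _ hd
    have hcomb : uw = l * u' + (1 - l) * uv := by nlinarith [hlmul]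
    have h1 : φ uw ≤ l * φ u' + (1 - l) * φ uv := by
      rw [hcomb]; exact hconv u' uv l (le_of_lt hl0) (le_of_lt hl1)
    have h2 : 1 < φ uv := hgt1 uv (by linarith)
    rw [hφu'] at h1
    nlinarith

end MyAux

section MyMain
variable {N : ℝ → ℝ → ℝ} {μ : Measure ℝ}

lemma my_ae_Icc (hμ : GoodMeasure μ) : ∀ᵐ v ∂μ, v ∈ Icc (0:ℝ) 1 := by
  rw [ae_iff]
  have : {v : ℝ | ¬ v ∈ Icc (0:ℝ) 1} = (Icc (0:ℝ) 1)ᶜ := rfl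
  rw [this]; exact hμ.1

lemma my_ae_ne (hμ : GoodMeasure μ) (a : ℝ) : ∀ᵐ v ∂μ, v ≠ a := by
  rw [ae_iff]
  have : {v : ℝ | ¬ v ≠ a} = {a} := by ext v; simp
  rw [this]; exact hμ.2.1 a

lemma my_ae_Ioo (hμ : GoodMeasure μ) : ∀ᵐ v ∂μ, v ∈ Ioo (0:ℝ) 1 := by
  filter_upwards [my_ae_Icc hμ, my_ae_ne hμ 0, my_ae_ne hμ 1] with v h1 h2 h3
  exact ⟨lt_of_le_of_ne h1.1 (Ne.symm h2), lt_of_le_of_ne h1.2 h3⟩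

lemma my_integrable_exp [IsFiniteMeasure μ] {f : ℝ → ℝ} (hf : Measurable f)
    (hbd : ∀ᵐ v ∂μ, 0 ≤ f v) : Integrable (fun v => Real.exp (-(f v))) μ := by
  refine Integrable.mono' (integrable_const 1) hf.neg.exp.aestronglyMeasurable ?_
  filter_upwards [hbd] with v hv
  rw [Real.norm_eq_abs, abs_of_pos (Real.exp_pos _)]
  exact Real.exp_le_one_iff.mpr (by linarith)

/-- Lower bound for S_A. -/
lemma my_survA_lb (hN : IsNorm2 N) (hC1 : CondC1 N) (hC2 : CondC2 N) (hC3 : CondC3 N)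
    [IsProbabilityMeasure μ] (hμ : GoodMeasure μ) {x : ℝ} (hx : 0 ≤ x) :
    (μ (Ioo (vlo N) (vhi N))).toReal * Real.exp (-x) ≤ survA N μ 0 x := by
  have hv₁ := my_vlo_mem hN hC1 hC2 hC3
  have hv₂ := my_vhi_mem hN hC1 hC2 hC3
  have hSA : survA N μ 0 x = ∫ v, Real.exp (-(x * tau N v)) ∂μ := by
    simp [survA, gpTail]
  have hmeas : Measurable fun v => Real.exp (-(x * tau N v)) :=
    ((my_tau_meas hN).const_mul x).neg.exp
  have hint : Integrable (fun v => Real.exp (-(x * tau N v))) μ := by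
    apply my_integrable_exp ((my_tau_meas hN).const_mul x)
    filter_upwards [my_ae_Icc hμ] with v hv
    exact mul_nonneg hx (my_tau_nonneg hN hv.1)
  have hset : ∫ v in Ioo (vlo N) (vhi N), Real.exp (-(x * tau N v)) ∂μ
      = (μ (Ioo (vlo N) (vhi N))).toReal * Real.exp (-x) := by
    rw [setIntegral_congr_fun measurableSet_Ioo
      (g := fun _ => Real.exp (-x)) ?_]
    · rw [setIntegral_const]; simp [smul_eq_mul]; rfl
    · intro v hv
      have : tau N v = 1 := my_omega0_convex hN hC2 hv₁ hv₂ (le_of_lt hv.1) (le_of_lt hv.2)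
      simp [this]
  rw [hSA, ← hset]
  exact setIntegral_le_integral hint (Eventually.of_forall fun v => le_of_lt (Real.exp_pos _))

/-- Lower bound for S_B. -/
lemma my_survB_lb (hN : IsNorm2 N) (hC1 : CondC1 N) (hC2 : CondC2 N) (hC3 : CondC3 N)
    [IsProbabilityMeasure μ] (hμ : GoodMeasure μ) {y : ℝ} (hy : 0 ≤ y) :
    (μ (Ioo (1 - vhi N) (1 - vlo N))).toReal * Real.exp (-y) ≤ survB N μ 0 y := by
  have hv₁ := my_vlo_mem hN hC1 hC2 hC3
  have hv₂ := my_vhi_mem hN hC1 hC2 hC3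
  have hSB : survB N μ 0 y = ∫ v, Real.exp (-(y * tau N (1 - v))) ∂μ := by
    simp [survB, gpTail]
  have htm : Measurable fun v : ℝ => tau N (1 - v) :=
    (my_tau_meas hN).comp (measurable_const.sub measurable_id)
  have hint : Integrable (fun v => Real.exp (-(y * tau N (1 - v)))) μ := by
    apply my_integrable_exp (htm.const_mul y)
    filter_upwards [my_ae_Icc hμ] with v hv
    exact mul_nonneg hy (my_tau_nonneg hN (by linarith [hv.2]))
  have hset : ∫ v in Ioo (1 - vhi N) (1 - vlo N), Real.exp (-(y * tau N (1 - v))) ∂μ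
      = (μ (Ioo (1 - vhi N) (1 - vlo N))).toReal * Real.exp (-y) := by
    rw [setIntegral_congr_fun measurableSet_Ioo
      (g := fun _ => Real.exp (-y)) ?_]
    · rw [setIntegral_const]; simp [smul_eq_mul]; rfl
    · intro v hv
      have h1 : vlo N < 1 - v := by linarith [hv.2]
      have h2 : 1 - v < vhi N := by linarith [hv.1]
      have : tau N (1 - v) = 1 :=
        my_omega0_convex hN hC2 hv₁ hv₂ (le_of_lt h1) (le_of_lt h2)
      simp [this]
  rw [hSB, ← hset]
  exact setIntegral_le_integral hint (Eventually.of_forall fun v => le_of_lt (Real.exp_pos _))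

/-- Key geometric inequality. -/
lemma my_G_le (hN : IsNorm2 N) (hC1 : CondC1 N) (hC2 : CondC2 N) (hC3 : CondC3 N)
    {β γ : ℝ} (hβ : 0 < β) (hγ : 0 < γ)
    (hω₁ : 1 - vlo N ≤ β / (β + γ)) (hω₂ : β / (β + γ) ≤ vlo N)
    {v : ℝ} (hv : v ∈ Ioo (0:ℝ) 1) :
    N β γ ≤ max (β * tau N v) (γ * tau N (1 - v)) ∧
      (v ≠ β / (β + γ) → N β γ < max (β * tau N v) (γ * tau N (1 - v))) := by
  have hv₁ := my_vlo_mem hN hC1 hC2 hC3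
  have hv₁inf : ∀ u ∈ Omega0 N, vlo N ≤ u := fun u hu => csInf_le my_omega0_bddBelow hu
  obtain ⟨hhalf, hle1, _⟩ := my_omega0_half hC2 hv₁
  set s := β + γ with hs
  have hs0 : 0 < s := by positivity
  set ω := β / s with hω
  have hω0 : 0 < ω := div_pos hβ hs0
  have hω1 : ω < 1 := by rw [hω, div_lt_one hs0]; linarith
  have hβω : β = s * ω := by rw [hω]; field_simp
  have hγω : γ = s * (1 - ω) := by rw [hω]; field_simp; ring
  clear hω
  clear_value ω
  have hωne : ω ≠ 0 := ne_of_gt hω0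
  have hωne' : (1 : ℝ) - ω ≠ 0 := by intro h; rw [sub_eq_zero] at h; exact absurd h.symm (ne_of_lt hω1)
  have hG : N β γ = s * N ω (1 - ω) := by
    rw [show N β γ = N (s * ω) (s * (1 - ω)) by rw [← hβω, ← hγω]]
    exact myN_smul hN (le_of_lt hs0) _ _
  have hGτ : N β γ = β * tau N ω := by
    rw [hG, tau, hβω]
    field_simp
  have hGτ' : N β γ = γ * tau N (1 - ω) := by
    rw [hG, tau, hγω]
    have h1 : (1:ℝ) - (1 - ω) = ω := by ring
    rw [h1, hC1 (1 - ω) ω]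
    field_simp
  rcases lt_trichotomy v ω with hlt | heq | hgt
  · -- v < ω : strict via β τ(v)
    have hstrict : tau N ω < tau N v :=
      my_strict hN hC2 hv₁ hv₁inf hv.1 hlt hω₂
    have h1 : N β γ < β * tau N v := by
      rw [hGτ]; exact mul_lt_mul_of_pos_left hstrict hβ
    exact ⟨le_of_lt (lt_of_lt_of_le h1 (le_max_left _ _)),
      fun _ => lt_of_lt_of_le h1 (le_max_left _ _)⟩
  · -- v = ω
    subst heq
    refine ⟨hGτ ▸ le_max_left _ _, fun hne => absurd rfl hne⟩
  · -- v > ω : strict via γ τ(1-v)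
    have h1ω : 1 - ω ≤ vlo N := by linarith [hω₁]
    have hstrict : tau N (1 - ω) < tau N (1 - v) :=
      my_strict hN hC2 hv₁ hv₁inf (by linarith [hv.2]) (by linarith) h1ω
    have h1 : N β γ < γ * tau N (1 - v) := by
      rw [hGτ']; exact mul_lt_mul_of_pos_left hstrict hγ
    exact ⟨le_of_lt (lt_of_lt_of_le h1 (le_max_right _ _)),
      fun _ => lt_of_lt_of_le h1 (le_max_right _ _)⟩

end MyMain

set_option maxHeartbeats 1600000 in
/-- Proposition 5: for `λ = 0`, `β, γ > 0`, `ω = β/(β+γ)`,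
if `v′ ≠ v″` and `1−v′ ≤ ω ≤ v′`, then
`t^{‖(β,γ)‖_m} S(q_A(t^β), q_B(t^γ)) → 0` as `t → ∞`. -/
theorem stmt6 (N : ℝ → ℝ → ℝ) (hN : IsNorm2 N) (hC1 : CondC1 N) (hC2 : CondC2 N)
    (hC3 : CondC3 N) (μ : Measure ℝ) [IsProbabilityMeasure μ] (hμ : GoodMeasure μ)
    (β γ : ℝ) (hβ : 0 < β) (hγ : 0 < γ) (qA qB : ℝ → ℝ)
    (hqA : ∀ t : ℝ, 1 ≤ t → 0 ≤ qA t ∧ survA N μ 0 (qA t) = 1 / t)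
    (hqB : ∀ t : ℝ, 1 ≤ t → 0 ≤ qB t ∧ survB N μ 0 (qB t) = 1 / t)
    (hne : vlo N ≠ vhi N)
    (hω₁ : 1 - vlo N ≤ β / (β + γ)) (hω₂ : β / (β + γ) ≤ vlo N) :
    Tendsto (fun t : ℝ => t ^ (N β γ) * survJ N μ 0 (qA (t ^ β)) (qB (t ^ γ)))
      atTop (nhds 0) := by
  classical
  have hv₁ := my_vlo_mem hN hC1 hC2 hC3
  have hv₂ := my_vhi_mem hN hC1 hC2 hC3
  obtain ⟨hv₁h, hv₁1, -⟩ := my_omega0_half hC2 hv₁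
  obtain ⟨hv₂h, hv₂1, -⟩ := my_omega0_half hC2 hv₂
  have hv₁₂ : vlo N < vhi N :=
    lt_of_le_of_ne (csInf_le_csSup (my_omega0_nonempty hN hC1 hC3) my_omega0_bddBelow my_omega0_bddAbove
      ) hne
  set cA := (μ (Ioo (vlo N) (vhi N))).toReal with hcA
  set cB := (μ (Ioo (1 - vhi N) (1 - vlo N))).toReal with hcB
  have hcA0 : 0 < cA :=
    ENNReal.toReal_pos (ne_of_gt (hμ.2.2 _ _ (by linarith) hv₁₂ hv₂1)) (measure_ne_top μ _)
  have hcB0 : 0 < cB :=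
    ENNReal.toReal_pos (ne_of_gt (hμ.2.2 _ _ (by linarith) (by linarith) (by linarith)))
      (measure_ne_top μ _)
  set c := min cA cB with hc
  have hc0 : 0 < c := lt_min hcA0 hcB0
  have hcle1 : c ≤ 1 := by
    have h1 : μ (Ioo (vlo N) (vhi N)) ≤ 1 := prob_le_one
    have h2 : cA ≤ 1 := by
      rw [hcA]
      have := ENNReal.toReal_mono (by norm_num) h1
      simpa using this
    exact le_trans (min_le_left _ _) h2
  have hlogc : Real.log c ≤ 0 := Real.log_nonpos (le_of_lt hc0) hcle1
  set C := -Real.log c with hCdef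
  have hC0 : 0 ≤ C := by rw [hCdef]; linarith
  set m := min β γ with hm
  have hm0 : 0 < m := lt_min hβ hγ
  set C1 := C / m with hC1def
  have hC10 : 0 ≤ C1 := div_nonneg hC0 (le_of_lt hm0)
  set G := N β γ with hGdef
  have hG0 : 0 ≤ G := hN.1 _ _
  set K := Real.exp (2 * C1 * G) with hK
  -- lower bounds for qA, qB
  have hqAlb : ∀ t : ℝ, 1 ≤ t → β * Real.log t + Real.log c ≤ qA (t ^ β) := by
    intro t ht
    have ht0 : 0 < t := lt_of_lt_of_le one_pos ht
    have htβ : 1 ≤ t ^ β := by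
      rw [← Real.one_rpow β]; exact Real.rpow_le_rpow zero_le_one ht (le_of_lt hβ)
    obtain ⟨hq0, hqeq⟩ := hqA (t ^ β) htβ
    have hlb := my_survA_lb hN hC1 hC2 hC3 hμ hq0
    rw [hqeq, ← hcA] at hlb
    have htβ0 : 0 < t ^ β := Real.rpow_pos_of_pos ht0 β
    have h1 : Real.exp (-(qA (t ^ β))) ≤ 1 / (cA * t ^ β) := by
      rw [le_div_iff₀ (by positivity)]
      calc Real.exp (-(qA (t ^ β))) * (cA * t ^ β)
          = (cA * Real.exp (-(qA (t ^ β)))) * t ^ β := by ring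
        _ ≤ (1 / t ^ β) * t ^ β := mul_le_mul_of_nonneg_right hlb (le_of_lt htβ0)
        _ = 1 := by field_simp
    have h2 := Real.log_le_log (Real.exp_pos _) h1
    rw [Real.log_exp, one_div, Real.log_inv,
      Real.log_mul (ne_of_gt hcA0) (ne_of_gt htβ0), Real.log_rpow ht0] at h2
    have h3 : Real.log c ≤ Real.log cA := Real.log_le_log hc0 (min_le_left _ _)
    linarith
  have hqBlb : ∀ t : ℝ, 1 ≤ t → γ * Real.log t + Real.log c ≤ qB (t ^ γ) := by
    intro t ht
    have ht0 : 0 < t := lt_of_lt_of_le one_pos ht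
    have htγ : 1 ≤ t ^ γ := by
      rw [← Real.one_rpow γ]; exact Real.rpow_le_rpow zero_le_one ht (le_of_lt hγ)
    obtain ⟨hq0, hqeq⟩ := hqB (t ^ γ) htγ
    have hlb := my_survB_lb hN hC1 hC2 hC3 hμ hq0
    rw [hqeq, ← hcB] at hlb
    have htγ0 : 0 < t ^ γ := Real.rpow_pos_of_pos ht0 γ
    have h1 : Real.exp (-(qB (t ^ γ))) ≤ 1 / (cB * t ^ γ) := by
      rw [le_div_iff₀ (by positivity)]
      calc Real.exp (-(qB (t ^ γ))) * (cB * t ^ γ)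
          = (cB * Real.exp (-(qB (t ^ γ)))) * t ^ γ := by ring
        _ ≤ (1 / t ^ γ) * t ^ γ := mul_le_mul_of_nonneg_right hlb (le_of_lt htγ0)
        _ = 1 := by field_simp
    have h2 := Real.log_le_log (Real.exp_pos _) h1
    rw [Real.log_exp, one_div, Real.log_inv,
      Real.log_mul (ne_of_gt hcB0) (ne_of_gt htγ0), Real.log_rpow ht0] at h2
    have h3 : Real.log c ≤ Real.log cB := Real.log_le_log hc0 (min_le_right _ _)
    linarith
  set g : ℝ → ℝ := fun v => max (β * tau N v) (γ * tau N (1 - v)) with hg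
  set M : ℝ → ℝ := fun v => max (tau N v) (tau N (1 - v)) with hM
  have hGle : ∀ v ∈ Ioo (0:ℝ) 1, G ≤ g v :=
    fun v hv => (my_G_le hN hC1 hC2 hC3 hβ hγ hω₁ hω₂ hv).1
  have hGlt : ∀ v ∈ Ioo (0:ℝ) 1, v ≠ β / (β + γ) → G < g v :=
    fun v hv hvne => (my_G_le hN hC1 hC2 hC3 hβ hγ hω₁ hω₂ hv).2 hvne
  -- pointwise chain bound
  have chain : ∀ t : ℝ, 1 ≤ t → ∀ v ∈ Ioo (0:ℝ) 1,
      t ^ G * Real.exp (-(max (qA (t ^ β) * tau N v) (qB (t ^ γ) * tau N (1 - v)))) ≤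
        Real.exp (C * M v - Real.log t * (g v - G)) := by
    intro t ht v hv
    have ht0 : 0 < t := lt_of_lt_of_le one_pos ht
    have hs0 : 0 ≤ Real.log t := Real.log_nonneg ht
    have hτ1 : 1 ≤ tau N v := my_tau_ge_one hC2 hv.1
    have hτ'1 : 1 ≤ tau N (1 - v) := my_tau_ge_one hC2 (by linarith [hv.2])
    have hτ0 : 0 ≤ tau N v := by linarith
    have hτ'0 : 0 ≤ tau N (1 - v) := by linarith
    have hMv : tau N v ≤ M v := le_max_left _ _
    have hMv' : tau N (1 - v) ≤ M v := le_max_right _ _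
    have hxa := hqAlb t ht
    have hyb := hqBlb t ht
    have ha1 : Real.log t * (β * tau N v) + Real.log c * M v ≤ qA (t ^ β) * tau N v := by
      have h1 : (β * Real.log t + Real.log c) * tau N v ≤ qA (t ^ β) * tau N v :=
        mul_le_mul_of_nonneg_right hxa hτ0
      have h2 : Real.log c * M v ≤ Real.log c * tau N v :=
        mul_le_mul_of_nonpos_left hMv hlogc
      nlinarith [h1, h2]
    have ha2 : Real.log t * (γ * tau N (1 - v)) + Real.log c * M v
        ≤ qB (t ^ γ) * tau N (1 - v) := by
      have h1 : (γ * Real.log t + Real.log c) * tau N (1 - v) ≤ qB (t ^ γ) * tau N (1 - v) :=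
        mul_le_mul_of_nonneg_right hyb hτ'0
      have h2 : Real.log c * M v ≤ Real.log c * tau N (1 - v) :=
        mul_le_mul_of_nonpos_left hMv' hlogc
      nlinarith [h1, h2]
    have hmax : Real.log t * g v + Real.log c * M v
        ≤ max (qA (t ^ β) * tau N v) (qB (t ^ γ) * tau N (1 - v)) := by
      have hgv : Real.log t * g v
          = max (Real.log t * (β * tau N v)) (Real.log t * (γ * tau N (1 - v))) := by
        rw [hg]; exact mul_max_of_nonneg _ _ hs0
      rw [hgv, ← max_add_add_right]
      exact max_le_max ha1 ha2
    have htG : t ^ G = Real.exp (Real.log t * G) := Real.rpow_def_of_pos ht0 G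
    rw [htG, ← Real.exp_add]
    apply Real.exp_le_exp.mpr
    rw [hCdef]
    linarith [hmax]
  -- exponent bound for domination
  have hbnd : ∀ t : ℝ, 1 ≤ t → 2 * C1 ≤ Real.log t → ∀ v ∈ Ioo (0:ℝ) 1,
      C * M v - Real.log t * (g v - G) ≤ 2 * C1 * G := by
    intro t ht hlt v hv
    have hs0 : 0 ≤ Real.log t := Real.log_nonneg ht
    have hg0 : G ≤ g v := hGle v hv
    have hτ1 : 1 ≤ tau N v := my_tau_ge_one hC2 hv.1
    have hτ'1 : 1 ≤ tau N (1 - v) := my_tau_ge_one hC2 (by linarith [hv.2])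
    have hMg : m * M v ≤ g v := by
      rcases le_total (tau N v) (tau N (1 - v)) with h | h
      · have hMeq : M v = tau N (1 - v) := max_eq_right h
        rw [hMeq]
        calc m * tau N (1 - v) ≤ γ * tau N (1 - v) :=
              mul_le_mul_of_nonneg_right (min_le_right _ _) (by linarith)
          _ ≤ g v := le_max_right _ _
      · have hMeq : M v = tau N v := max_eq_left h
        rw [hMeq]
        calc m * tau N v ≤ β * tau N v :=
              mul_le_mul_of_nonneg_right (min_le_left _ _) (by linarith)
          _ ≤ g v := le_max_left _ _
    have hCM : C * M v ≤ C1 * g v := by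
      have h1 : C * M v = C1 * (m * M v) := by
        rw [hC1def]; field_simp
      rw [h1]; exact mul_le_mul_of_nonneg_left hMg hC10
    rcases le_or_gt (g v) (2 * G) with hcase | hcase
    · have h2 : C1 * g v ≤ C1 * (2 * G) := mul_le_mul_of_nonneg_left hcase hC10
      nlinarith [mul_nonneg hs0 (sub_nonneg.mpr hg0)]
    · have h2 : 2 * C1 * (g v - G) ≤ Real.log t * (g v - G) :=
        mul_le_mul_of_nonneg_right hlt (by linarith)
      nlinarith [hCM, h2, mul_nonneg hC10 (by linarith : (0:ℝ) ≤ g v - 2 * G),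
        mul_nonneg hC10 hG0]
  -- rewrite the target as an integral
  have hrw : (fun t : ℝ => t ^ N β γ * survJ N μ 0 (qA (t ^ β)) (qB (t ^ γ))) =
      fun t : ℝ => ∫ v,
        t ^ G * Real.exp (-(max (qA (t ^ β) * tau N v) (qB (t ^ γ) * tau N (1 - v)))) ∂μ := by
    funext t
    have hgp : ∀ z : ℝ, gpTail 0 z = Real.exp (-z) := fun z => if_pos rfl
    rw [survJ]
    simp only [hgp]
    rw [integral_const_mul]
  rw [hrw]
  have h0 : (0:ℝ) = ∫ (_ : ℝ), (0:ℝ) ∂μ := by simp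
  rw [h0]
  apply tendsto_integral_filter_of_dominated_convergence (bound := fun _ => K)
  · -- measurability
    apply Eventually.of_forall
    intro t
    apply Measurable.aestronglyMeasurable
    exact ((((my_tau_meas hN).const_mul _).max
      (((my_tau_meas hN).comp (measurable_const.sub measurable_id)).const_mul _)).neg.exp).const_mul _
  · -- bound
    filter_upwards [eventually_ge_atTop (1:ℝ), eventually_ge_atTop (Real.exp (2 * C1))]
      with t ht hte
    have hlogt : 2 * C1 ≤ Real.log t := by
      have := Real.log_le_log (Real.exp_pos _) hte
      rwa [Real.log_exp] at this
    filter_upwards [my_ae_Ioo hμ] with v hv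
    have ht0 : 0 < t := lt_of_lt_of_le one_pos ht
    have h1 := chain t ht v hv
    have h2 := hbnd t ht hlogt v hv
    rw [Real.norm_eq_abs, abs_of_nonneg (by positivity)]
    calc t ^ G * Real.exp (-(max (qA (t ^ β) * tau N v) (qB (t ^ γ) * tau N (1 - v))))
        ≤ Real.exp (C * M v - Real.log t * (g v - G)) := h1
      _ ≤ K := by rw [hK]; exact Real.exp_le_exp.mpr h2
  · exact integrable_const K
  · -- pointwise limit
    filter_upwards [my_ae_Ioo hμ, my_ae_ne hμ (β / (β + γ))] with v hv hvω
    have hpos : 0 < g v - G := sub_pos.mpr (hGlt v hv hvω)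
    apply squeeze_zero' (f := fun t : ℝ =>
        t ^ G * Real.exp (-(max (qA (t ^ β) * tau N v) (qB (t ^ γ) * tau N (1 - v)))))
      (g := fun t : ℝ => Real.exp (C * M v - Real.log t * (g v - G)))
    · filter_upwards [eventually_ge_atTop (1:ℝ)] with t ht
      have ht0 : 0 < t := lt_of_lt_of_le one_pos ht
      positivity
    · filter_upwards [eventually_ge_atTop (1:ℝ)] with t ht
      exact chain t ht v hv
    · have h1 : Tendsto (fun t : ℝ => Real.log t * (g v - G)) atTop atTop :=
        Tendsto.atTop_mul_const hpos Real.tendsto_log_atTop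
      have h2 : Tendsto (fun t : ℝ => -(Real.log t * (g v - G))) atTop atBot :=
        tendsto_neg_atTop_atBot.comp h1
      have h3 : Tendsto (fun t : ℝ => C * M v + -(Real.log t * (g v - G))) atTop atBot :=
        tendsto_atBot_add_const_left atTop (C * M v) h2
      have h4 : Tendsto (fun t : ℝ => Real.exp (C * M v + -(Real.log t * (g v - G))))
          atTop (nhds 0) := Real.tendsto_exp_atBot.comp h3
      simpa [sub_eq_add_neg] using h4
end
end

section
/- Let λ < 0 with ‖(1,1)‖_m > 1. Then: (a) for all x, y ≥ 0 with min(x,y)·‖(1,1)‖_m ≥ −1/λ, the joint survival function satisfies S(x,y) = 0; and (b) for all β, γ > 0 there exists t₀ < ∞ such that S(q_A(t^β), q_B(t^γ)) = 0 for all t > t₀. -/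
open MeasureTheory Filter Set

noncomputable section

lemma hexp_pos {l : ℝ} (hl : l < 0) : 0 < -1 / l := by
  rw [div_pos_iff]; right; constructor <;> [norm_num; exact hl]

lemma gpTail_nonneg (l z : ℝ) : 0 ≤ gpTail l z := by
  unfold gpTail
  split
  · exact (Real.exp_pos _).le
  · exact Real.rpow_nonneg (le_max_right _ _) _

lemma gpTail_eq_zero {l : ℝ} (hl : l < 0) {z : ℝ} (hz : 1 + l * z ≤ 0) : gpTail l z = 0 := by
  unfold gpTail
  rw [if_neg hl.ne, max_eq_right hz, Real.zero_rpow (ne_of_gt (hexp_pos hl))]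

lemma gpTail_le_one {l : ℝ} (hl : l < 0) {z : ℝ} (hz : 0 ≤ z) : gpTail l z ≤ 1 := by
  unfold gpTail
  rw [if_neg hl.ne]
  apply Real.rpow_le_one (le_max_right _ _) _ (hexp_pos hl).le
  have : l * z ≤ 0 := mul_nonpos_of_nonpos_of_nonneg hl.le hz
  simp only [max_le_iff]
  constructor <;> linarith

lemma gpTail_ge {l : ℝ} (hl : l < 0) {z r : ℝ} (hr : 0 ≤ r) (h : r ≤ 1 + l * z) :
    r ^ (-1 / l) ≤ gpTail l z := by
  unfold gpTail
  rw [if_neg hl.ne]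
  exact Real.rpow_le_rpow hr (le_max_of_le_left h) (hexp_pos hl).le

lemma gpTail_meas {l : ℝ} (hl : l < 0) {h : ℝ → ℝ} (hh : Measurable h) :
    Measurable fun v => gpTail l (h v) := by
  have : (fun v => gpTail l (h v)) = fun v => (max (1 + l * h v) 0) ^ (-1 / l) := by
    funext v; unfold gpTail; rw [if_neg hl.ne]
  rw [this]
  exact (Real.continuous_rpow_const (hexp_pos hl).le).measurable.comp
    ((measurable_const.add (measurable_const.mul hh)).max measurable_const)

lemma norm2_cont {N : ℝ → ℝ → ℝ} (hN : IsNorm2 N) : Continuous fun v : ℝ => N v (1 - v) := by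
  obtain ⟨h0, -, hhom, htri⟩ := hN
  have hL : ∀ v w : ℝ, N v (1 - v) - N w (1 - w) ≤ N 1 (-1) * |v - w| := by
    intro v w
    have h := htri w (1 - w) (v - w) (w - v)
    rw [show w + (v - w) = v by ring, show (1 - w) + (w - v) = 1 - v by ring] at h
    have h2 := hhom (v - w) 1 (-1)
    rw [show (v - w) * 1 = v - w by ring, show (v - w) * (-1) = w - v by ring] at h2
    rw [h2] at h
    linarith [h]
  have hLip : LipschitzWith (Real.toNNReal (N 1 (-1))) (fun v : ℝ => N v (1 - v)) := by
    apply LipschitzWith.of_dist_le_mul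
    intro v w
    rw [Real.dist_eq, Real.dist_eq, Real.coe_toNNReal _ (h0 1 (-1)), abs_sub_le_iff]
    refine ⟨hL v w, ?_⟩
    have := hL w v
    rwa [abs_sub_comm] at this
  exact hLip.continuous

lemma tau_meas {N : ℝ → ℝ → ℝ} (hN : IsNorm2 N) : Measurable (tau N) :=
  (norm2_cont hN).measurable.div measurable_id

lemma tau_nonneg {N : ℝ → ℝ → ℝ} (hN : IsNorm2 N) {v : ℝ} (hv : 0 ≤ v) : 0 ≤ tau N v :=
  div_nonneg (hN.1 _ _) hv

/-- a.e. membership of `[0,1]`. -/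
lemma ae_Icc {μ : Measure ℝ} (hμ : GoodMeasure μ) : ∀ᵐ v ∂μ, v ∈ Icc (0:ℝ) 1 := by
  rw [Filter.eventually_iff, mem_ae_iff]
  exact hμ.1

lemma ae_Ioo {μ : Measure ℝ} (hμ : GoodMeasure μ) : ∀ᵐ v ∂μ, v ∈ Ioo (0:ℝ) 1 := by
  rw [Filter.eventually_iff, mem_ae_iff]
  apply measure_mono_null (t := ((Icc (0:ℝ) 1)ᶜ ∪ {0}) ∪ {1})
  · intro v hv
    simp only [mem_compl_iff, mem_setOf_eq, mem_Ioo, not_and_or, not_lt] at hv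
    by_cases h0 : v ∈ Icc (0:ℝ) 1
    · obtain ⟨ha, hb⟩ := h0
      rcases hv with h | h
      · left; right; simp only [mem_singleton_iff]; linarith
      · right; simp only [mem_singleton_iff]; linarith
    · left; left; exact h0
  · rw [measure_union_null_iff, measure_union_null_iff]
    exact ⟨⟨hμ.1, hμ.2.1 0⟩, hμ.2.1 1⟩

lemma integrable_gp {μ : Measure ℝ} [IsProbabilityMeasure μ] (hμ : GoodMeasure μ)
    {l : ℝ} (hl : l < 0) {h : ℝ → ℝ} (hh : Measurable h)
    (hpos : ∀ v ∈ Icc (0:ℝ) 1, 0 ≤ h v) :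
    Integrable (fun v => gpTail l (h v)) μ := by
  apply Integrable.mono' (integrable_const (1:ℝ)) (gpTail_meas hl hh).aestronglyMeasurable
  filter_upwards [ae_Icc hμ] with v hv
  rw [Real.norm_eq_abs, abs_of_nonneg (gpTail_nonneg _ _)]
  exact gpTail_le_one hl (hpos v hv)

lemma integral_gp_lb {μ : Measure ℝ} [IsProbabilityMeasure μ] (hμ : GoodMeasure μ)
    {l : ℝ} (hl : l < 0) {h : ℝ → ℝ} (hh : Measurable h)
    (hpos : ∀ v ∈ Icc (0:ℝ) 1, 0 ≤ h v)
    {p q r : ℝ} (hr : 0 ≤ r)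
    (hbound : ∀ v ∈ Ioo p q, r ≤ 1 + l * h v) :
    r ^ (-1 / l) * (μ (Ioo p q)).toReal ≤ ∫ v, gpTail l (h v) ∂μ := by
  have hint := integrable_gp hμ hl hh hpos
  calc r ^ (-1 / l) * (μ (Ioo p q)).toReal
      ≤ ∫ v in Ioo p q, gpTail l (h v) ∂μ := by
        have := setIntegral_ge_of_const_le measurableSet_Ioo (measure_ne_top μ _)
          (fun v hv => gpTail_ge hl hr (hbound v hv)) hint.integrableOn
        rw [smul_eq_mul, mul_comm] at this
        exact this
    _ ≤ ∫ v, gpTail l (h v) ∂μ :=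
        setIntegral_le_integral hint (Filter.Eventually.of_forall fun v => gpTail_nonneg _ _)

/-- Part (a) as a standalone lemma. -/
lemma parta {N : ℝ → ℝ → ℝ} (hN : IsNorm2 N) (hC1 : CondC1 N)
    {μ : Measure ℝ} [IsProbabilityMeasure μ] (hμ : GoodMeasure μ)
    {l : ℝ} (hl : l < 0) (hN11 : 1 < N 1 1) :
    ∀ x y : ℝ, 0 ≤ x → 0 ≤ y → -1 / l ≤ min x y * N 1 1 → survJ N μ l x y = 0 := by
  intro x y hx hy hmin
  unfold survJ
  apply integral_eq_zero_of_ae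
  filter_upwards [ae_Ioo hμ] with v hv
  obtain ⟨hv0, hv1⟩ := hv
  have hN11nn : (0:ℝ) ≤ N 1 1 := by linarith
  have hg2 : N 1 1 ≤ 2 * N v (1 - v) := by
    have h := hN.2.2.2 v (1 - v) (1 - v) v
    rw [show v + (1 - v) = (1:ℝ) by ring, show (1 - v) + v = (1:ℝ) by ring,
      hC1 (1 - v) v] at h
    linarith
  have key : -1 / l ≤ max (x * tau N v) (y * tau N (1 - v)) := by
    rcases le_total v (1 - v) with h | h
    · have hτ : N 1 1 ≤ tau N v := by
        rw [tau, le_div_iff₀ hv0]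
        nlinarith [hN.1 v (1 - v)]
      calc -1 / l ≤ min x y * N 1 1 := hmin
        _ ≤ x * N 1 1 := mul_le_mul_of_nonneg_right (min_le_left _ _) hN11nn
        _ ≤ x * tau N v := mul_le_mul_of_nonneg_left hτ hx
        _ ≤ _ := le_max_left _ _
    · have hτ : N 1 1 ≤ tau N (1 - v) := by
        rw [tau, show 1 - (1 - v) = v by ring, hC1 (1 - v) v, le_div_iff₀ (by linarith)]
        nlinarith [hN.1 v (1 - v)]
      calc -1 / l ≤ min x y * N 1 1 := hmin
        _ ≤ y * N 1 1 := mul_le_mul_of_nonneg_right (min_le_right _ _) hN11nn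
        _ ≤ y * tau N (1 - v) := mul_le_mul_of_nonneg_left hτ hy
        _ ≤ _ := le_max_right _ _
  show gpTail l (max (x * tau N v) (y * tau N (1 - v))) = 0
  apply gpTail_eq_zero hl
  have h2 : l * max (x * tau N v) (y * tau N (1 - v)) ≤ l * (-1 / l) :=
    mul_le_mul_of_nonpos_left key hl.le
  have h3 : l * (-1 / l) = -1 := by
    rw [mul_comm]
    exact div_mul_cancel₀ (-1) hl.ne
  linarith

set_option maxHeartbeats 1000000 in
/-- Case 4 of Section 3.2: for `λ < 0` with `‖(1,1)‖_m > 1`: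
(a) `S(x,y) = 0` whenever `x, y ≥ 0` and `min(x,y)·‖(1,1)‖_m ≥ −1/λ`;
(b) for all `β, γ > 0` there is `t₀ < ∞` with `S(q_A(t^β), q_B(t^γ)) = 0`
for all `t > t₀`. -/
theorem stmt9 (N : ℝ → ℝ → ℝ) (hN : IsNorm2 N) (hC1 : CondC1 N) (hC2 : CondC2 N)
    (hC3 : CondC3 N) (μ : Measure ℝ) [IsProbabilityMeasure μ] (hμ : GoodMeasure μ)
    (l : ℝ) (hl : l < 0) (hN11 : 1 < N 1 1) :
    (∀ x y : ℝ, 0 ≤ x → 0 ≤ y → -1 / l ≤ min x y * N 1 1 → survJ N μ l x y = 0) ∧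
    (∀ β γ : ℝ, 0 < β → 0 < γ → ∀ qA qB : ℝ → ℝ,
      (∀ t : ℝ, 1 ≤ t → 0 ≤ qA t ∧ survA N μ l (qA t) = 1 / t) →
      (∀ t : ℝ, 1 ≤ t → 0 ≤ qB t ∧ survB N μ l (qB t) = 1 / t) →
      ∃ t₀ : ℝ, ∀ t : ℝ, t₀ < t → survJ N μ l (qA (t ^ β)) (qB (t ^ γ)) = 0) := by
  have hN11pos : (0:ℝ) < N 1 1 := by linarith
  have hPa := parta hN hC1 hμ hl hN11
  refine ⟨hPa, ?_⟩
  intro β γ hβ hγ qA qB hqA hqB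
  -- the threshold c
  set c : ℝ := -1 / (l * N 1 1) with hc
  have hlN : l * N 1 1 < 0 := mul_neg_of_neg_of_pos hl hN11pos
  have hcpos : 0 < c := by
    rw [hc, div_pos_iff]; right; exact ⟨by norm_num, hlN⟩
  have hcN : c * N 1 1 = -1 / l := by
    rw [hc, div_mul_eq_mul_div, div_eq_div_iff hlN.ne hl.ne]
    ring
  -- construct v0 with tau N v0 = 1
  obtain ⟨x0, y0, hx0, hy0, hne, heq⟩ := hC3
  have hNuw : N (min x0 y0) (max x0 y0) = max x0 y0 := by
    rcases le_total x0 y0 with h | h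
    · rw [min_eq_left h, max_eq_right h] at *
      rw [heq]
    · rw [min_eq_right h, max_eq_left h] at *
      rw [hC1, heq]
  set u := min x0 y0 with hu
  set w := max x0 y0 with hw
  have huw : u < w := min_lt_max.mpr hne
  have hu0 : 0 ≤ u := le_min hx0 hy0
  have hwpos : 0 < w := lt_of_le_of_lt hu0 huw
  set a := u / w with ha
  have ha0 : 0 ≤ a := div_nonneg hu0 hwpos.le
  have ha1 : a < 1 := (div_lt_one hwpos).mpr huw
  have hNa1 : N a 1 = 1 := by
    have h := hN.2.2.1 w a 1
    rw [abs_of_pos hwpos, mul_one] at h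
    have hwa : w * a = u := by
      rw [ha, mul_div_cancel₀ _ hwpos.ne']
    rw [hwa, hNuw] at h
    have h2 : w * N a 1 = w * 1 := by rw [mul_one, ← h]
    exact mul_left_cancel₀ hwpos.ne' h2
  set v0 : ℝ := 1 / (1 + a) with hv0
  have h1a : (0:ℝ) < 1 + a := by linarith
  have hv0pos : 0 < v0 := by rw [hv0]; positivity
  have hv0le : v0 ≤ 1 := by rw [hv0, div_le_one h1a]; linarith
  have htauv0 : tau N v0 = 1 := by
    have h1 : (1:ℝ) - v0 = v0 * a := by
      rw [hv0]; field_simp; ring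
    have h2 : N v0 (1 - v0) = v0 * N 1 a := by
      rw [h1]
      have h3 := hN.2.2.1 v0 1 a
      rw [abs_of_pos hv0pos, mul_one] at h3
      exact h3
    rw [tau, h2, hC1 1 a, hNa1, mul_one, div_self hv0pos.ne']
  -- continuity of tau at v0, interval where tau ≤ s
  have hτcont : ContinuousAt (tau N) v0 := by
    have h1 : ContinuousAt (fun v : ℝ => N v (1 - v)) v0 := (norm2_cont hN).continuousAt
    exact h1.div continuousAt_id hv0pos.ne'
  set s : ℝ := (1 + N 1 1) / 2 with hs
  have hs1 : 1 < s := by rw [hs]; linarith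
  have hsN : s < N 1 1 := by rw [hs]; linarith
  obtain ⟨d, hd, hball⟩ := Metric.continuousAt_iff.mp hτcont (s - 1) (by linarith)
  set p : ℝ := max (v0 - d) (v0 / 2) with hp
  have hppos : 0 < p := lt_of_lt_of_le (by linarith : (0:ℝ) < v0 / 2) (le_max_right _ _)
  have hpv0 : p < v0 := max_lt (by linarith) (by linarith)
  have hτs : ∀ v ∈ Ioo p v0, 0 ≤ tau N v ∧ tau N v ≤ s := by
    intro v hv
    obtain ⟨h1, h2⟩ := hv
    refine ⟨tau_nonneg hN (le_of_lt (lt_trans hppos h1)), ?_⟩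
    have hdist : dist v v0 < d := by
      rw [Real.dist_eq, abs_of_neg (by linarith : v - v0 < 0)]
      have := le_max_left (v0 - d) (v0 / 2)
      linarith
    have h3 := hball hdist
    rw [Real.dist_eq, htauv0] at h3
    have h4 := abs_lt.mp h3
    linarith [h4.1, h4.2]
  -- positivity of r = 1 + l c s
  set r : ℝ := 1 + l * (c * s) with hr
  have hlc : l * c = -1 / N 1 1 := by
    rw [hc, mul_comm, div_mul_eq_mul_div, div_eq_div_iff hlN.ne hN11pos.ne']
    ring
  have hrpos : 0 < r := by
    have h5 : s / N 1 1 < 1 := (div_lt_one hN11pos).mpr hsN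
    have h6 : r = 1 + (l * c) * s := by rw [hr]; ring
    have h7 : -1 / N 1 1 * s = -(s / N 1 1) := by ring
    rw [h6, hlc, h7]
    linarith
  -- lower bounds on survA, survB for arguments ≤ c
  have hbA : ∀ x : ℝ, 0 ≤ x → x ≤ c →
      r ^ (-1 / l) * (μ (Ioo p v0)).toReal ≤ survA N μ l x := by
    intro x hx hxc
    unfold survA
    refine integral_gp_lb hμ hl (measurable_const.mul (tau_meas hN))
      (fun v hv => mul_nonneg hx (tau_nonneg hN hv.1)) hrpos.le ?_
    intro v hv
    obtain ⟨ht0, hts⟩ := hτs v hv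
    have hxs : x * tau N v ≤ c * s := mul_le_mul hxc hts ht0 hcpos.le
    show r ≤ 1 + l * (x * tau N v)
    nlinarith [mul_le_mul_of_nonpos_left hxs hl.le]
  have hbB : ∀ y : ℝ, 0 ≤ y → y ≤ c →
      r ^ (-1 / l) * (μ (Ioo (1 - v0) (1 - p))).toReal ≤ survB N μ l y := by
    intro y hy hyc
    unfold survB
    refine integral_gp_lb hμ hl ?_ ?_ hrpos.le ?_
    · exact measurable_const.mul ((tau_meas hN).comp (measurable_const.sub measurable_id))
    · exact fun v hv => mul_nonneg hy (tau_nonneg hN (by linarith [hv.2] : (0:ℝ) ≤ 1 - v))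
    intro v hv
    obtain ⟨h1, h2⟩ := hv
    have hmem : (1 : ℝ) - v ∈ Ioo p v0 := ⟨by linarith, by linarith⟩
    obtain ⟨ht0, hts⟩ := hτs _ hmem
    have hys : y * tau N (1 - v) ≤ c * s := mul_le_mul hyc hts ht0 hcpos.le
    nlinarith [mul_le_mul_of_nonpos_left hys hl.le]
  set δA : ℝ := r ^ (-1 / l) * (μ (Ioo p v0)).toReal with hδAdef
  set δB : ℝ := r ^ (-1 / l) * (μ (Ioo (1 - v0) (1 - p))).toReal with hδBdef
  have hδA : 0 < δA :=
    mul_pos (Real.rpow_pos_of_pos hrpos _)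
      (ENNReal.toReal_pos (hμ.2.2 p v0 hppos.le hpv0 hv0le).ne' (measure_ne_top μ _))
  have hδB : 0 < δB :=
    mul_pos (Real.rpow_pos_of_pos hrpos _)
      (ENNReal.toReal_pos
        (hμ.2.2 (1 - v0) (1 - p) (by linarith) (by linarith) (by linarith)).ne'
        (measure_ne_top μ _))
  -- the key inversion fact
  have key : ∀ e δ : ℝ, 0 < e → 0 < δ → ∀ t : ℝ, 1 < t → (1 / δ) ^ e⁻¹ < t →
      1 / t ^ e < δ := by
    intro e δ he hδ t ht hlt
    have h0 : (0:ℝ) < 1 / δ := by positivity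
    have h1 : (1 / δ) ^ (e⁻¹ * e) < t ^ e := by
      rw [Real.rpow_mul h0.le]
      exact Real.rpow_lt_rpow (Real.rpow_nonneg h0.le _) hlt he
    rw [inv_mul_cancel₀ he.ne', Real.rpow_one] at h1
    have h2 : (0:ℝ) < t ^ e := Real.rpow_pos_of_pos (by linarith) _
    rw [div_lt_iff₀ h2]
    rw [div_lt_iff₀ hδ] at h1
    nlinarith
  refine ⟨max 1 (max ((1 / δA) ^ β⁻¹) ((1 / δB) ^ γ⁻¹)), fun t ht => ?_⟩
  have ht1 : (1:ℝ) < t := lt_of_le_of_lt (le_max_left _ _) ht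
  have h1β : (1:ℝ) ≤ t ^ β := by
    calc (1:ℝ) = 1 ^ β := (Real.one_rpow β).symm
      _ ≤ t ^ β := Real.rpow_le_rpow zero_le_one ht1.le hβ.le
  have h1γ : (1:ℝ) ≤ t ^ γ := by
    calc (1:ℝ) = 1 ^ γ := (Real.one_rpow γ).symm
      _ ≤ t ^ γ := Real.rpow_le_rpow zero_le_one ht1.le hγ.le
  obtain ⟨hqA0, hqAe⟩ := hqA (t ^ β) h1β
  obtain ⟨hqB0, hqBe⟩ := hqB (t ^ γ) h1γ
  have hAgt : c < qA (t ^ β) := by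
    by_contra hcon
    push_neg at hcon
    have hb := hbA _ hqA0 hcon
    rw [hqAe] at hb
    have hlt := key β δA hβ hδA t ht1
      (lt_of_le_of_lt (le_trans (le_max_left _ _) (le_max_right _ _)) ht)
    linarith
  have hBgt : c < qB (t ^ γ) := by
    by_contra hcon
    push_neg at hcon
    have hb := hbB _ hqB0 hcon
    rw [hqBe] at hb
    have hlt := key γ δB hγ hδB t ht1
      (lt_of_le_of_lt (le_trans (le_max_right _ _) (le_max_right _ _)) ht)
    linarith
  apply hPa _ _ hqA0 hqB0
  have hmin : c ≤ min (qA (t ^ β)) (qB (t ^ γ)) := le_min hAgt.le hBgt.le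
  calc -1 / l = c * N 1 1 := hcN.symm
    _ ≤ min (qA (t ^ β)) (qB (t ^ γ)) * N 1 1 :=
        mul_le_mul_of_nonneg_right hmin hN11pos.le
end
end
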